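/- arXiv:1106.4454 — 2 statements merged into one kernel-verified Lean document; each statement's English description precedes it below -/
import Mathlib

section
/- Let T be a tournament on a finite vertex set, let k be a nonnegative integer, let A' be a DESC-set of T with |A'| ≤ k, and let T' = T − A'. If two vertices x and y belong to the same strong component of T', then |d⁺_T(x) − d⁺_T(y)| ≤ k. -/
/-!
Digraphs on a finite vertex type `V` are modelled by their arc sets
`D : Finset (V × V)`, where `(x, y) ∈ D` means there is an arc from `x` to `y`.
-/

namespace DescPaper

variable {V : Type*} [Fintype V] [DecidableEq V]

/-- The out-degree of `x` in the digraph `D`. -/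
def outDeg (D : Finset (V × V)) (x : V) : ℕ :=
  (D.filter (fun a => a.1 = x)).card

/-- The in-degree of `x` in the digraph `D`. -/
def inDeg (D : Finset (V × V)) (x : V) : ℕ :=
  (D.filter (fun a => a.2 = x)).card

/-- The number of arcs of `D` from `x` to a vertex of `Y`. -/
def outDegInto (D : Finset (V × V)) (x : V) (Y : Finset V) : ℕ :=
  (D.filter (fun a => a.1 = x ∧ a.2 ∈ Y)).card

/-- The subgraph of `D` induced by the vertex set `X`. -/
def induce (D : Finset (V × V)) (X : Finset V) : Finset (V × V) :=
  D.filter (fun a => a.1 ∈ X ∧ a.2 ∈ X)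

/-- Reachability by a directed path in the digraph `D`. -/
def Reach (D : Finset (V × V)) : V → V → Prop :=
  Relation.ReflTransGen (fun u v => (u, v) ∈ D)

/-- The subgraph of `D` induced by `X` is strongly connected. -/
def StronglyConnectedOn (D : Finset (V × V)) (X : Finset V) : Prop :=
  ∀ x ∈ X, ∀ y ∈ X, Reach (induce D X) x y

/-- `X` is the vertex set of a strong component of `D`:
a maximal (nonempty) vertex set inducing a strongly connected subgraph. -/
def IsStrongComponent (D : Finset (V × V)) (X : Finset V) : Prop :=
  X.Nonempty ∧ StronglyConnectedOn D X ∧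
    ∀ Y : Finset V, X ⊆ Y → StronglyConnectedOn D Y → Y = X

/-- The digraph `D` is balanced: every vertex has equal in- and out-degree. -/
def IsBalanced (D : Finset (V × V)) : Prop :=
  ∀ x : V, outDeg D x = inDeg D x

/-- The subgraph of `D` induced by `X` is Eulerian:
strongly connected and balanced. -/
def EulerianOn (D : Finset (V × V)) (X : Finset V) : Prop :=
  StronglyConnectedOn D X ∧ IsBalanced (induce D X)

/-- `A'` is a DESC-set of `D`: a set of arcs of `D` such that every strong
component of `D - A'` is Eulerian. -/
def IsDESC (D A' : Finset (V × V)) : Prop :=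
  A' ⊆ D ∧ ∀ X : Finset V, IsStrongComponent (D \ A') X → EulerianOn (D \ A') X

/-- `desc D` is the minimum size of a DESC-set of `D`. -/
noncomputable def desc (D : Finset (V × V)) : ℕ :=
  sInf {n | ∃ A' : Finset (V × V), IsDESC D A' ∧ A'.card = n}

/-- `T` is a tournament: no loops, and for every pair of distinct vertices
exactly one of the two possible arcs is present. -/
def IsTournament (T : Finset (V × V)) : Prop :=
  (∀ x : V, (x, x) ∉ T) ∧ ∀ x y : V, x ≠ y → ((x, y) ∈ T ↔ (y, x) ∉ T)

/-- `dstar A' X Y` is the number of arcs of `A'` with one endpoint in `X`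
and the other endpoint in `Y` (in either direction). -/
def dstar (A' : Finset (V × V)) (X Y : Finset V) : ℕ :=
  (A'.filter (fun a => (a.1 ∈ X ∧ a.2 ∈ Y) ∨ (a.1 ∈ Y ∧ a.2 ∈ X))).card

end DescPaper

namespace DescPaper
variable {V : Type*} [Fintype V] [DecidableEq V]

lemma reach_mono {D : Finset (V × V)} {X Y : Finset V} (h : X ⊆ Y) {u v : V}
    (hr : Reach (induce D X) u v) : Reach (induce D Y) u v := by
  refine Relation.ReflTransGen.mono (fun a b hab => ?_) u v hr
  simp only [induce, Finset.mem_filter] at hab ⊢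
  exact ⟨hab.1, h hab.2.1, h hab.2.2⟩

lemma not_cross {D : Finset (V × V)} {C : Finset V} (hC : IsStrongComponent D C)
    {x y z : V} (hx : x ∈ C) (hy : y ∈ C) (hz : z ∉ C)
    (h1 : (x, z) ∈ D) (h2 : (z, y) ∈ D) : False := by
  obtain ⟨hne, hconn, hmax⟩ := hC
  have hsub : C ⊆ insert z C := Finset.subset_insert _ _
  have harc1 : (x, z) ∈ induce D (insert z C) := by
    simp [induce, h1, Finset.mem_insert, hx]
  have harc2 : (z, y) ∈ induce D (insert z C) := by
    simp [induce, h2, Finset.mem_insert, hy]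
  have hconn' : StronglyConnectedOn D (insert z C) := by
    have key1 : ∀ w ∈ C, Reach (induce D (insert z C)) w z := fun w hw =>
      Relation.ReflTransGen.tail (reach_mono hsub (hconn w hw x hx)) harc1
    have key2 : ∀ w ∈ C, Reach (induce D (insert z C)) z w := fun w hw =>
      Relation.ReflTransGen.head harc2 (reach_mono hsub (hconn y hy w hw))
    intro u hu v hv
    rcases Finset.mem_insert.mp hu with hu1 | hu1 <;>
      rcases Finset.mem_insert.mp hv with hv1 | hv1
    · subst hu1; subst hv1; exact Relation.ReflTransGen.refl
    · subst hu1; exact key2 v hv1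
    · subst hv1; exact key1 u hu1
    · exact reach_mono hsub (hconn u hu1 v hv1)
  have := hmax _ hsub hconn'
  exact hz (this ▸ Finset.mem_insert_self z C)

end DescPaper

namespace DescPaper
set_option linter.unusedSectionVars false
variable {V : Type*} [Fintype V] [DecidableEq V]

lemma sum_eq_ind (s : Finset (V × V)) (b : V × V) :
    (if b ∈ s then (1:ℤ) else 0) = ∑ a ∈ s, if a = b then (1:ℤ) else 0 :=
  (Finset.sum_ite_eq' s b (fun _ => (1:ℤ))).symm

lemma sum_fst (a : V × V) (x : V) (C : Finset V) :
    ∑ z ∈ C, (if a = (x, z) then (1:ℤ) else 0) = if a.1 = x ∧ a.2 ∈ C then 1 else 0 := by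
  by_cases h : a.1 = x
  · simp [Prod.ext_iff, h, Finset.sum_ite_eq]
  · simp [Prod.ext_iff, h]

lemma sum_snd (a : V × V) (x : V) (C : Finset V) :
    ∑ z ∈ C, (if a = (z, x) then (1:ℤ) else 0) = if a.2 = x ∧ a.1 ∈ C then 1 else 0 := by
  by_cases h : a.2 = x
  · simp [Prod.ext_iff, h, Finset.sum_ite_eq]
  · simp [Prod.ext_iff, h]

lemma sum_mem_fst (D : Finset (V × V)) (x : V) (C : Finset V) :
    ∑ z ∈ C, (if (x, z) ∈ D then (1:ℤ) else 0)
      = ∑ a ∈ D, (if a.1 = x ∧ a.2 ∈ C then 1 else 0) := by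
  calc ∑ z ∈ C, (if (x, z) ∈ D then (1:ℤ) else 0)
      = ∑ z ∈ C, ∑ a ∈ D, (if a = (x, z) then (1:ℤ) else 0) :=
        Finset.sum_congr rfl fun z _ => sum_eq_ind D (x, z)
    _ = ∑ a ∈ D, ∑ z ∈ C, (if a = (x, z) then (1:ℤ) else 0) := Finset.sum_comm
    _ = _ := Finset.sum_congr rfl fun a _ => sum_fst a x C

lemma sum_mem_snd (D : Finset (V × V)) (x : V) (C : Finset V) :
    ∑ z ∈ C, (if (z, x) ∈ D then (1:ℤ) else 0)
      = ∑ a ∈ D, (if a.2 = x ∧ a.1 ∈ C then 1 else 0) := by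
  calc ∑ z ∈ C, (if (z, x) ∈ D then (1:ℤ) else 0)
      = ∑ z ∈ C, ∑ a ∈ D, (if a = (z, x) then (1:ℤ) else 0) :=
        Finset.sum_congr rfl fun z _ => sum_eq_ind D (z, x)
    _ = ∑ a ∈ D, ∑ z ∈ C, (if a = (z, x) then (1:ℤ) else 0) := Finset.sum_comm
    _ = _ := Finset.sum_congr rfl fun a _ => sum_snd a x C

lemma outDeg_sum (D : Finset (V × V)) (x : V) :
    (outDeg D x : ℤ) = ∑ z, (if (x, z) ∈ D then (1:ℤ) else 0) := by
  rw [sum_mem_fst]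
  unfold outDeg
  rw [Finset.card_filter]
  push_cast
  exact Finset.sum_congr rfl fun a _ => by simp

lemma inDeg_sum (D : Finset (V × V)) (x : V) :
    (inDeg D x : ℤ) = ∑ z, (if (z, x) ∈ D then (1:ℤ) else 0) := by
  rw [sum_mem_snd]
  unfold inDeg
  rw [Finset.card_filter]
  push_cast
  exact Finset.sum_congr rfl fun a _ => by simp

lemma outDeg_induce_sum (D : Finset (V × V)) (C : Finset V) (x : V) (hx : x ∈ C) :
    (outDeg (induce D C) x : ℤ) = ∑ z ∈ C, (if (x, z) ∈ D then (1:ℤ) else 0) := by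
  rw [sum_mem_fst]
  unfold outDeg induce
  rw [Finset.filter_filter, Finset.card_filter]
  push_cast
  refine Finset.sum_congr rfl fun a _ => ?_
  by_cases h1 : a.1 = x <;> by_cases h2 : a.2 ∈ C <;> simp [h1, h2, hx]

lemma inDeg_induce_sum (D : Finset (V × V)) (C : Finset V) (x : V) (hx : x ∈ C) :
    (inDeg (induce D C) x : ℤ) = ∑ z ∈ C, (if (z, x) ∈ D then (1:ℤ) else 0) := by
  rw [sum_mem_snd]
  unfold inDeg induce
  rw [Finset.filter_filter, Finset.card_filter]
  push_cast
  refine Finset.sum_congr rfl fun a _ => ?_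
  by_cases h1 : a.2 = x <;> by_cases h2 : a.1 ∈ C <;> simp [h1, h2, hx]

set_option maxHeartbeats 1000000 in
lemma arc_bound {C : Finset V} {x y : V}
    (hxC : x ∈ C) (hyC : y ∈ C) (hxy : x ≠ y)
    {a : V × V} (hne : a.1 ≠ a.2) :
    ((if a.1 = x ∧ a.2 ∈ C then (1:ℤ) else 0) + (if a.2 = x ∧ a.1 ∈ C then 1 else 0)
      + (if a.1 = y ∧ a.2 ∈ C then 1 else 0) + (if a.2 = y ∧ a.1 ∈ C then 1 else 0))
    + 2 * ((if a.1 = x ∧ a.2 ∈ Cᶜ then (1:ℤ) else 0) + (if a.2 = x ∧ a.1 ∈ Cᶜ then 1 else 0)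
      + (if a.1 = y ∧ a.2 ∈ Cᶜ then 1 else 0) + (if a.2 = y ∧ a.1 ∈ Cᶜ then 1 else 0)) ≤ 2 := by
  obtain ⟨u, v⟩ := a
  simp only [Finset.mem_compl] at *
  by_cases p1 : u = x <;> by_cases p2 : v = x <;> by_cases p3 : u = y <;>
    by_cases p4 : v = y <;> by_cases q1 : u ∈ C <;> by_cases q2 : v ∈ C <;>
    simp_all

end DescPaper

open DescPaper

/-- Lemma 3 of the paper. -/
theorem stmt2 {V : Type*} [Fintype V] [DecidableEq V]
    (T A' : Finset (V × V)) (k : ℕ)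
    (hT : IsTournament T) (hDESC : IsDESC T A') (hk : A'.card ≤ k)
    (x y : V)
    (hsame : ∃ C : Finset V, IsStrongComponent (T \ A') C ∧ x ∈ C ∧ y ∈ C) :
    |(outDeg T x : ℤ) - outDeg T y| ≤ k := by
  rcases eq_or_ne x y with rfl | hxy
  · simp
  obtain ⟨C, hC, hxC, hyC⟩ := hsame
  obtain ⟨hA'T, hdesc⟩ := hDESC
  obtain ⟨-, hbal⟩ := hdesc C hC
  set h : V → ℤ := fun z =>
    (if (x, z) ∈ T then (1:ℤ) else 0) - (if (z, x) ∈ T then 1 else 0)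
      - (if (y, z) ∈ T then 1 else 0) + (if (z, y) ∈ T then 1 else 0) with hh
  set g : V → ℤ := fun z =>
    (if (x, z) ∈ A' then (1:ℤ) else 0) - (if (z, x) ∈ A' then 1 else 0)
      - (if (y, z) ∈ A' then 1 else 0) + (if (z, y) ∈ A' then 1 else 0) with hg
  set inr : V × V → ℤ := fun a =>
    (if a.1 = x ∧ a.2 ∈ C then (1:ℤ) else 0) + (if a.2 = x ∧ a.1 ∈ C then 1 else 0)
      + (if a.1 = y ∧ a.2 ∈ C then 1 else 0) + (if a.2 = y ∧ a.1 ∈ C then 1 else 0) with hinr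
  set otr : V × V → ℤ := fun a =>
    (if a.1 = x ∧ a.2 ∈ Cᶜ then (1:ℤ) else 0) + (if a.2 = x ∧ a.1 ∈ Cᶜ then 1 else 0)
      + (if a.1 = y ∧ a.2 ∈ Cᶜ then 1 else 0) + (if a.2 = y ∧ a.1 ∈ Cᶜ then 1 else 0) with hotr
  -- Step A : 2 * (d⁺x - d⁺y) = ∑ h
  have degsum : ∀ w : V, (outDeg T w : ℤ) + inDeg T w = (Fintype.card V : ℤ) - 1 := by
    intro w
    rw [outDeg_sum, inDeg_sum, ← Finset.sum_add_distrib]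
    have e1 : ∀ z : V, ((if (w, z) ∈ T then (1:ℤ) else 0) + (if (z, w) ∈ T then 1 else 0))
        = 1 - (if z = w then 1 else 0) := by
      intro z
      by_cases hzw : z = w
      · subst hzw; simp [hT.1 z]
      · have hi := hT.2 w z (Ne.symm hzw)
        by_cases h1 : (w, z) ∈ T
        · simp [h1, hi.mp h1, hzw]
        · have h2 : (z, w) ∈ T := by by_contra h2; exact h1 (hi.mpr h2)
          simp [h1, h2, hzw]
    rw [Finset.sum_congr rfl fun z _ => e1 z, Finset.sum_sub_distrib, Finset.sum_ite_eq']
    simp [Finset.card_univ]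
  have keyA : 2 * ((outDeg T x : ℤ) - outDeg T y) = ∑ z, h z := by
    have ex := degsum x; have ey := degsum y
    have e2 : ∑ z, h z = ((outDeg T x : ℤ) - inDeg T x) - ((outDeg T y : ℤ) - inDeg T y) := by
      rw [outDeg_sum, inDeg_sum, outDeg_sum T y, inDeg_sum T y]
      simp only [hh, Finset.sum_add_distrib, Finset.sum_sub_distrib]
      ring
    linarith
  -- Step C : within C, replace T by A' using balance
  have memT : ∀ b : V × V, (if b ∈ T then (1:ℤ) else 0)
      = (if b ∈ T \ A' then 1 else 0) + (if b ∈ A' then 1 else 0) := by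
    intro b
    by_cases hb : b ∈ A'
    · simp [hb, hA'T hb, Finset.mem_sdiff]
    · by_cases hbT : b ∈ T <;> simp [hb, hbT, Finset.mem_sdiff]
  have balw : ∀ w ∈ C, ∑ z ∈ C, ((if (w, z) ∈ T \ A' then (1:ℤ) else 0)
      - (if (z, w) ∈ T \ A' then 1 else 0)) = 0 := by
    intro w hw
    rw [Finset.sum_sub_distrib, ← outDeg_induce_sum _ _ _ hw, ← inDeg_induce_sum _ _ _ hw,
      hbal w]
    ring
  have stepC : ∑ z ∈ C, h z = ∑ z ∈ C, g z := by
    have e3 : ∀ z, h z = ((if (x, z) ∈ T \ A' then (1:ℤ) else 0) - (if (z, x) ∈ T \ A' then 1 else 0))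
        - ((if (y, z) ∈ T \ A' then (1:ℤ) else 0) - (if (z, y) ∈ T \ A' then 1 else 0)) + g z := by
      intro z
      simp only [hh, hg, memT]
      ring
    rw [Finset.sum_congr rfl fun z _ => e3 z, Finset.sum_add_distrib, Finset.sum_sub_distrib,
      balw x hxC, balw y hyC]
    ring
  -- Step D : |∑_C g| ≤ ∑_{A'} inr
  have stepD : |∑ z ∈ C, g z| ≤ ∑ a ∈ A', inr a := by
    calc |∑ z ∈ C, g z| ≤ ∑ z ∈ C, |g z| := Finset.abs_sum_le_sum_abs _ _
      _ ≤ ∑ z ∈ C, ((if (x, z) ∈ A' then (1:ℤ) else 0) + (if (z, x) ∈ A' then 1 else 0)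
            + (if (y, z) ∈ A' then 1 else 0) + (if (z, y) ∈ A' then 1 else 0)) := by
          refine Finset.sum_le_sum fun z _ => ?_
          simp only [hg]
          rw [abs_le]
          constructor <;> split_ifs <;> norm_num
      _ = ∑ a ∈ A', inr a := by
          simp only [Finset.sum_add_distrib, sum_mem_fst, sum_mem_snd, hinr]
  -- Step E : outside C
  have stepE : |∑ z ∈ Cᶜ, h z| ≤ ∑ a ∈ A', 2 * otr a := by
    have pt : ∀ z ∈ Cᶜ, |h z| ≤ 2 * ((if (x, z) ∈ A' then (1:ℤ) else 0)
        + (if (z, x) ∈ A' then 1 else 0) + (if (y, z) ∈ A' then 1 else 0)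
        + (if (z, y) ∈ A' then 1 else 0)) := by
      intro z hz
      have hz' : z ∉ C := Finset.mem_compl.mp hz
      by_cases hany : (x, z) ∈ A' ∨ (z, x) ∈ A' ∨ (y, z) ∈ A' ∨ (z, y) ∈ A'
      · have habs : |h z| ≤ 2 := by
          simp only [hh]; rw [abs_le]; constructor <;> split_ifs <;> norm_num
        refine habs.trans ?_
        rcases hany with h1 | h1 | h1 | h1 <;> simp only [h1, if_true] <;>
          split_ifs <;> norm_num
      · push_neg at hany
        obtain ⟨n1, n2, n3, n4⟩ := hany
        have hzx : z ≠ x := fun e => hz' (e ▸ hxC)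
        have hzy : z ≠ y := fun e => hz' (e ▸ hyC)
        have hzero : h z = 0 := by
          by_cases m1 : (x, z) ∈ T
          · have m2 : (z, x) ∉ T := (hT.2 x z (Ne.symm hzx)).mp m1
            have m4 : (z, y) ∉ T := fun m4 =>
              not_cross hC hxC hyC hz' (Finset.mem_sdiff.mpr ⟨m1, n1⟩)
                (Finset.mem_sdiff.mpr ⟨m4, n4⟩)
            have m3 : (y, z) ∈ T := (hT.2 y z (Ne.symm hzy)).mpr m4
            simp [hh, m1, m2, m3, m4]
          · have m2 : (z, x) ∈ T := (hT.2 z x hzx).mpr m1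
            have m3 : (y, z) ∉ T := fun m3 =>
              not_cross hC hyC hxC hz' (Finset.mem_sdiff.mpr ⟨m3, n3⟩)
                (Finset.mem_sdiff.mpr ⟨m2, n2⟩)
            have m4 : (z, y) ∈ T := (hT.2 z y hzy).mpr m3
            simp [hh, m1, m2, m3, m4]
        rw [hzero]
        simp only [abs_zero]
        split_ifs <;> norm_num
    calc |∑ z ∈ Cᶜ, h z| ≤ ∑ z ∈ Cᶜ, |h z| := Finset.abs_sum_le_sum_abs _ _
      _ ≤ ∑ z ∈ Cᶜ, 2 * ((if (x, z) ∈ A' then (1:ℤ) else 0) + (if (z, x) ∈ A' then 1 else 0)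
            + (if (y, z) ∈ A' then 1 else 0) + (if (z, y) ∈ A' then 1 else 0)) :=
          Finset.sum_le_sum pt
      _ = ∑ a ∈ A', 2 * otr a := by
          rw [← Finset.mul_sum, ← Finset.mul_sum]
          congr 1
          simp only [Finset.sum_add_distrib, sum_mem_fst, sum_mem_snd, hotr]
  -- Step F : per-arc bound
  have stepF : ∀ a ∈ A', inr a + 2 * otr a ≤ 2 := by
    intro a ha
    have haT : (a.1, a.2) ∈ T := by rw [Prod.mk.eta]; exact hA'T ha
    have hne : a.1 ≠ a.2 := by
      intro e
      rw [← e] at haT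
      exact hT.1 a.1 haT
    simpa only [hinr, hotr] using arc_bound hxC hyC hxy hne
  -- assemble
  have hcard : (∑ a ∈ A', (inr a + 2 * otr a)) ≤ 2 * (k : ℤ) := by
    have h1 : (∑ a ∈ A', (inr a + 2 * otr a)) ≤ ∑ _a ∈ A', (2:ℤ) := Finset.sum_le_sum stepF
    have h2 : (∑ _a ∈ A', (2:ℤ)) = 2 * A'.card := by
      simp [mul_comm]
    have h3 : (A'.card : ℤ) ≤ k := by exact_mod_cast hk
    linarith
  have hsplit : ∑ z, h z = ∑ z ∈ C, h z + ∑ z ∈ Cᶜ, h z := (Finset.sum_add_sum_compl C h).symm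
  have hmain : |∑ z, h z| ≤ 2 * (k : ℤ) := by
    calc |∑ z, h z| ≤ |∑ z ∈ C, h z| + |∑ z ∈ Cᶜ, h z| := by rw [hsplit]; exact abs_add_le _ _
      _ ≤ ∑ a ∈ A', inr a + ∑ a ∈ A', 2 * otr a := by
          rw [stepC]; exact add_le_add stepD stepE
      _ = ∑ a ∈ A', (inr a + 2 * otr a) := (Finset.sum_add_distrib).symm
      _ ≤ 2 * (k : ℤ) := hcard
  rw [← keyA, abs_mul] at hmain
  have : |(2:ℤ)| = 2 := by norm_num
  rw [this] at hmain
  linarith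
end

section
/- Let D be a digraph on a finite vertex set, and let C be a strong component of D that is Eulerian. Then desc(D) = desc(D − C), where D − C is the digraph obtained from D by deleting all vertices of C together with all arcs incident to them. -/
/-!
Digraphs on a finite vertex type `V` are modelled by their arc sets
`D : Finset (V × V)`, where `(x, y) ∈ D` means there is an arc from `x` to `y`.
-/

namespace DescPaper

variable {V : Type*} [Fintype V] [DecidableEq V]

/-! Auxiliary lemmas -/

lemma reach_mono_s9 {D E : Finset (V × V)} (h : D ⊆ E) {x y : V} (hr : Reach D x y) :
    Reach E x y :=
  Relation.ReflTransGen.mono (fun _ _ huv => h huv) _ _ hr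

lemma induce_mono_graph {D E : Finset (V × V)} (h : D ⊆ E) (X : Finset V) :
    induce D X ⊆ induce E X :=
  Finset.filter_subset_filter _ h

lemma induce_mono_set (D : Finset (V × V)) {X Y : Finset V} (h : X ⊆ Y) :
    induce D X ⊆ induce D Y := by
  intro a ha
  simp only [induce, Finset.mem_filter] at *
  exact ⟨ha.1, h ha.2.1, h ha.2.2⟩

lemma sc_mono {D E : Finset (V × V)} (h : D ⊆ E) {X : Finset V}
    (hX : StronglyConnectedOn D X) : StronglyConnectedOn E X :=
  fun x hx y hy => reach_mono_s9 (induce_mono_graph h X) (hX x hx y hy)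

lemma sc_union {D : Finset (V × V)} {X Z : Finset V}
    (hX : StronglyConnectedOn D X) (hZ : StronglyConnectedOn D Z) {w : V}
    (hwX : w ∈ X) (hwZ : w ∈ Z) : StronglyConnectedOn D (X ∪ Z) := by
  intro x hx y hy
  have hXsub : induce D X ⊆ induce D (X ∪ Z) := induce_mono_set D Finset.subset_union_left
  have hZsub : induce D Z ⊆ induce D (X ∪ Z) := induce_mono_set D Finset.subset_union_right
  have hxw : Reach (induce D (X ∪ Z)) x w := by
    rcases Finset.mem_union.1 hx with h | h
    · exact reach_mono_s9 hXsub (hX x h w hwX)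
    · exact reach_mono_s9 hZsub (hZ x h w hwZ)
  have hwy : Reach (induce D (X ∪ Z)) w y := by
    rcases Finset.mem_union.1 hy with h | h
    · exact reach_mono_s9 hXsub (hX w hwX y h)
    · exact reach_mono_s9 hZsub (hZ w hwZ y h)
  exact hxw.trans hwy

/-- Any singleton is Eulerian in any digraph. -/
lemma eulerian_singleton (D : Finset (V × V)) (x : V) : EulerianOn D {x} := by
  constructor
  · intro a ha b hb
    simp only [Finset.mem_singleton] at ha hb
    subst ha; subst hb
    exact Relation.ReflTransGen.refl
  · intro y
    unfold outDeg inDeg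
    congr 1
    ext a
    simp only [induce, Finset.mem_filter, Finset.mem_singleton]
    constructor
    · rintro ⟨⟨ha, h1, h2⟩, h3⟩
      exact ⟨⟨ha, h1, h2⟩, by rw [h2, ← h1, h3]⟩
    · rintro ⟨⟨ha, h1, h2⟩, h3⟩
      exact ⟨⟨ha, h1, h2⟩, by rw [h1, ← h2, h3]⟩

/-- A strongly connected set meeting a strong component is contained in it. -/
lemma subset_of_meets {D : Finset (V × V)} {X Z : Finset V}
    (hX : IsStrongComponent D X) (hZ : StronglyConnectedOn D Z) {w : V}
    (hwX : w ∈ X) (hwZ : w ∈ Z) : Z ⊆ X := by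
  have h := hX.2.2 (X ∪ Z) Finset.subset_union_left (sc_union hX.2.1 hZ hwX hwZ)
  intro z hz
  rw [← h]
  exact Finset.mem_union_right _ hz

lemma eulerianOn_congr {E F : Finset (V × V)} {Y : Finset V}
    (h : induce E Y = induce F Y) : EulerianOn E Y ↔ EulerianOn F Y := by
  unfold EulerianOn StronglyConnectedOn
  rw [h]

lemma sc_congr {E F : Finset (V × V)} {Y : Finset V}
    (h : induce E Y = induce F Y) : StronglyConnectedOn E Y ↔ StronglyConnectedOn F Y := by
  unfold StronglyConnectedOn
  rw [h]

lemma reach_empty {x y : V} (h : Reach (∅ : Finset (V × V)) x y) : x = y := by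
  induction h with
  | refl => rfl
  | tail _ h2 _ => simp at h2

lemma reach_head {E : Finset (V × V)} {x y : V} (h : Reach E x y) (hne : x ≠ y) :
    ∃ c, (x, c) ∈ E := by
  rcases h.cases_head with rfl | ⟨c, hc, _⟩
  · exact absurd rfl hne
  · exact ⟨c, hc⟩

/-- The whole arc set is always a DESC-set. -/
lemma isDESC_self (D : Finset (V × V)) : IsDESC D D := by
  refine ⟨subset_rfl, fun Y hY => ?_⟩
  rw [Finset.sdiff_self] at hY ⊢
  obtain ⟨y, hy⟩ := hY.1
  have hYy : Y = {y} := by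
    apply Finset.eq_singleton_iff_unique_mem.2
    refine ⟨hy, fun z hz => ?_⟩
    have := hY.2.1 y hy z hz
    have hempty : induce (∅ : Finset (V × V)) Y = ∅ := Finset.filter_empty _
    rw [hempty] at this
    exact (reach_empty this).symm
  rw [hYy]
  exact eulerian_singleton _ y

/-- If `Y` avoids `X`, induced subgraphs on `Y` ignore arcs meeting `X`. -/
lemma induce_filter_eq {D A' : Finset (V × V)} {X Y : Finset V}
    (hdisj : ∀ y ∈ Y, y ∉ X) :
    induce ((D.filter (fun a => a.1 ∉ X ∧ a.2 ∉ X)) \ A') Y = induce (D \ A') Y := by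
  ext a
  simp only [induce, Finset.mem_filter, Finset.mem_sdiff]
  constructor
  · rintro ⟨⟨⟨ha, -⟩, h2⟩, h3, h4⟩
    exact ⟨⟨ha, h2⟩, h3, h4⟩
  · rintro ⟨⟨ha, h2⟩, h3, h4⟩
    exact ⟨⟨⟨ha, hdisj _ h3, hdisj _ h4⟩, h2⟩, h3, h4⟩

/-- If no arc of `A'` starts in `X`, then the induced subgraph on `X` ignores `A'`. -/
lemma induce_sdiff_eq {D A' : Finset (V × V)} {X : Finset V}
    (h : ∀ a ∈ A', a.1 ∉ X) : induce (D \ A') X = induce D X := by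
  ext a
  simp only [induce, Finset.mem_filter, Finset.mem_sdiff]
  constructor
  · rintro ⟨⟨ha, -⟩, h3, h4⟩
    exact ⟨ha, h3, h4⟩
  · rintro ⟨ha, h3, h4⟩
    exact ⟨⟨ha, fun hmem => h a hmem h3⟩, h3, h4⟩

/-- Forward transfer: a DESC-set of `D - X` is a DESC-set of `D`. -/
lemma descA {D : Finset (V × V)} {X : Finset V}
    (hX : IsStrongComponent D X) (hE : EulerianOn D X) {A' : Finset (V × V)}
    (h : IsDESC (D.filter (fun a => a.1 ∉ X ∧ a.2 ∉ X)) A') : IsDESC D A' := by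
  set D' := D.filter (fun a => a.1 ∉ X ∧ a.2 ∉ X) with hD'
  have hA'D' : A' ⊆ D' := h.1
  have hA'X : ∀ a ∈ A', a.1 ∉ X := fun a ha => (Finset.mem_filter.1 (hA'D' ha)).2.1
  have hindX : induce (D \ A') X = induce D X := induce_sdiff_eq hA'X
  refine ⟨hA'D'.trans (Finset.filter_subset _ _), fun Y hY => ?_⟩
  by_cases hmeet : ∃ w, w ∈ X ∧ w ∈ Y
  · -- Y meets X, so Y = X
    obtain ⟨w, hwX, hwY⟩ := hmeet
    have hYD : StronglyConnectedOn D Y := sc_mono Finset.sdiff_subset hY.2.1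
    have hYsubX : Y ⊆ X := subset_of_meets hX hYD hwX hwY
    have hXsc : StronglyConnectedOn (D \ A') X := by
      rw [sc_congr hindX]; exact hE.1
    have hXY : X = Y := hY.2.2 X hYsubX hXsc
    rw [← hXY]
    exact ⟨hXsc, by unfold IsBalanced; rw [hindX]; exact hE.2⟩
  · -- Y disjoint from X: Y is a strong component of D' \ A'
    push_neg at hmeet
    have hdisj : ∀ y ∈ Y, y ∉ X := fun y hy hx => hmeet y hx hy
    have hind : induce (D' \ A') Y = induce (D \ A') Y := induce_filter_eq hdisj
    have hcomp : IsStrongComponent (D' \ A') Y := by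
      refine ⟨hY.1, ?_, ?_⟩
      · rw [sc_congr hind]; exact hY.2.1
      · intro Z hYZ hZ
        exact hY.2.2 Z hYZ
          (sc_mono (Finset.sdiff_subset_sdiff (Finset.filter_subset _ _) subset_rfl) hZ)
    have := h.2 Y hcomp
    rwa [eulerianOn_congr hind] at this

/-- Backward transfer: intersecting a DESC-set of `D` with `D - X` gives a
DESC-set of `D - X`. -/
lemma descB {D : Finset (V × V)} {X : Finset V}
    (hX : IsStrongComponent D X) {A' : Finset (V × V)} (h : IsDESC D A') :
    IsDESC (D.filter (fun a => a.1 ∉ X ∧ a.2 ∉ X)) (A' ∩ (D.filter (fun a => a.1 ∉ X ∧ a.2 ∉ X))) := by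
  set D' := D.filter (fun a => a.1 ∉ X ∧ a.2 ∉ X) with hD'
  set B := A' ∩ D' with hB
  have hsd : D' \ B = D' \ A' := by
    ext a
    simp only [hB, Finset.mem_sdiff, Finset.mem_inter]
    tauto
  refine ⟨Finset.inter_subset_right, fun Y hY => ?_⟩
  rw [hsd] at hY ⊢
  by_cases hmeet : ∃ w, w ∈ X ∧ w ∈ Y
  · -- Y meets X; since vertices of X are isolated in D', Y is a singleton
    obtain ⟨w, hwX, hwY⟩ := hmeet
    have hYw : Y = {w} := by
      apply Finset.eq_singleton_iff_unique_mem.2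
      refine ⟨hwY, fun z hz => ?_⟩
      by_contra hzw
      have hr := hY.2.1 w hwY z hz
      obtain ⟨c, hc⟩ := reach_head hr (fun hwz => hzw hwz.symm)
      have : (w, c) ∈ D' \ A' := (Finset.mem_filter.1 hc).1
      have : (w, c) ∈ D' := (Finset.mem_sdiff.1 this).1
      exact (Finset.mem_filter.1 this).2.1 hwX
    rw [hYw]
    exact eulerian_singleton _ w
  · -- Y disjoint from X: Y is a strong component of D \ A'
    push_neg at hmeet
    have hdisj : ∀ y ∈ Y, y ∉ X := fun y hy hx => hmeet y hx hy
    have hind : induce (D' \ A') Y = induce (D \ A') Y := induce_filter_eq hdisj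
    have hcomp : IsStrongComponent (D \ A') Y := by
      refine ⟨hY.1, ?_, ?_⟩
      · rw [← sc_congr hind]; exact hY.2.1
      · intro Z hYZ hZ
        by_cases hZmeet : ∃ w, w ∈ X ∧ w ∈ Z
        · obtain ⟨w, hwX, hwZ⟩ := hZmeet
          have hZD : StronglyConnectedOn D Z := sc_mono Finset.sdiff_subset hZ
          have hZsubX : Z ⊆ X := subset_of_meets hX hZD hwX hwZ
          obtain ⟨y, hy⟩ := hY.1
          exact absurd (hZsubX (hYZ hy)) (hdisj y hy)
        · push_neg at hZmeet
          have hZdisj : ∀ z ∈ Z, z ∉ X := fun z hz hx => hZmeet z hx hz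
          have hindZ : induce (D' \ A') Z = induce (D \ A') Z := induce_filter_eq hZdisj
          exact hY.2.2 Z hYZ (by rw [sc_congr hindZ]; exact hZ)
    have := h.2 Y hcomp
    rwa [eulerianOn_congr hind]

end DescPaper

open DescPaper

/-- Deleting an Eulerian strong component (its vertices together
with all arcs incident to them) does not change `desc`. -/
theorem stmt9 {V : Type*} [Fintype V] [DecidableEq V]
    (D : Finset (V × V)) (X : Finset V)
    (hX : IsStrongComponent D X) (hE : EulerianOn D X) :
    desc D = desc (D.filter (fun a => a.1 ∉ X ∧ a.2 ∉ X)) := by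
  set D' := D.filter (fun a => a.1 ∉ X ∧ a.2 ∉ X) with hD'
  apply le_antisymm
  · -- desc D ≤ desc D'
    have hne : {n | ∃ A' : Finset (V × V), IsDESC D' A' ∧ A'.card = n}.Nonempty :=
      ⟨D'.card, D', isDESC_self D', rfl⟩
    obtain ⟨A', hA', hcard⟩ := Nat.sInf_mem hne
    calc desc D ≤ A'.card := Nat.sInf_le ⟨A', descA hX hE hA', rfl⟩
      _ = desc D' := hcard
  · -- desc D' ≤ desc D
    have hne : {n | ∃ A' : Finset (V × V), IsDESC D A' ∧ A'.card = n}.Nonempty :=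
      ⟨D.card, D, isDESC_self D, rfl⟩
    obtain ⟨A', hA', hcard⟩ := Nat.sInf_mem hne
    calc desc D' ≤ (A' ∩ D').card := Nat.sInf_le ⟨A' ∩ D', descB hX hA', rfl⟩
      _ ≤ A'.card := Finset.card_le_card Finset.inter_subset_left
      _ = desc D := hcard
end
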